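/- Let ℓ ≥ 3 be an integer and S a (2^ℓ − 1)-periodic binary sequence whose linear complexity is at most 2ℓ (as is the case for Gold codes). Then there exists an integer k with 1 < k ≤ 7 such that S has a full peak in the periodic correlation measure of order k, i.e. θ_k(S) = 2^ℓ − 1. -/

import Mathlib

open Finset

/-- The first `N` terms of the binary sequence `s` satisfy a linear recurrence of order `L`
over `F₂`: `s (i+L) = c_{L-1} s (i+L-1) + … + c_0 s i` for `0 ≤ i < N - L`. -/
def IsLinRecOn (s : ℕ → ZMod 2) (N L : ℕ) : Prop :=
  ∃ c : Fin L → ZMod 2, ∀ i, i + L < N → s (i + L) = ∑ j : Fin L, c j * s (i + j)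

/-- The `N`th linear complexity of a binary sequence `s`: the smallest positive `L` such that
the first `N` terms satisfy a linear recurrence of order `L`, with the convention that it is `0`
when the first `N` terms all vanish. -/
noncomputable def linComplexity (s : ℕ → ZMod 2) (N : ℕ) : ℕ :=
  if ∀ i < N, s i = 0 then 0 else sInf {L | 0 < L ∧ IsLinRecOn s N L}

/-- The `N`th (aperiodic) correlation measure of order `k` of a binary sequence `s`:
`max_{U,D} |∑_{n=0}^{U-1} (-1)^{s_{n+d₁}+…+s_{n+d_k}}|` over `U ≤ N - k + 1` and
`0 ≤ d₁ < … < d_k ≤ N - U`. -/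
noncomputable def corr (s : ℕ → ZMod 2) (N k : ℕ) : ℕ :=
  sSup {m : ℕ | ∃ (U : ℕ) (d : Fin k → ℕ), U + k ≤ N + 1 ∧ StrictMono d ∧
    (∀ j, d j + U ≤ N) ∧
    m = (∑ n ∈ range U, (-1 : ℤ) ^ (∑ j : Fin k, (s (n + d j)).val)).natAbs}

/-- The periodic correlation measure of order `k` of a `T`-periodic binary sequence `s`:
`max_D |∑_{n=0}^{T-1} (-1)^{s_{n+d₁}+…+s_{n+d_k}}|` over `0 ≤ d₁ < … < d_k < T`. -/
noncomputable def pcorr (s : ℕ → ZMod 2) (T k : ℕ) : ℕ :=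
  sSup {m : ℕ | ∃ d : Fin k → ℕ, StrictMono d ∧ (∀ j, d j < T) ∧
    m = (∑ n ∈ range T, (-1 : ℤ) ^ (∑ j : Fin k, (s (n + d j)).val)).natAbs}

/-- The first `N` terms of `s` are generated by a (not necessarily linear) recurrence of
order `M`. -/
def IsMaxRecOn (s : ℕ → ZMod 2) (N M : ℕ) : Prop :=
  ∃ f : (Fin M → ZMod 2) → ZMod 2, ∀ i, i + M < N → s (i + M) = f (fun j => s (i + j))

/-- The `N`th maximum-order complexity of a binary sequence `s`. -/
noncomputable def maxOrderComplexity (s : ℕ → ZMod 2) (N : ℕ) : ℕ :=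
  sInf {M | 0 < M ∧ IsMaxRecOn s N M}

/-! ### Auxiliary lemmas -/

lemma two_mul_lt_two_pow {ℓ : ℕ} (h : 3 ≤ ℓ) : 2 * ℓ < 2 ^ ℓ := by
  induction ℓ, h using Nat.le_induction with
  | base => norm_num
  | succ n hn ih =>
    have h2 : 2 ≤ 2 ^ n := by
      calc 2 ≤ 2 ^ 3 := by norm_num
      _ ≤ 2 ^ n := Nat.pow_le_pow_right (by norm_num) hn
    rw [pow_succ]
    omega

lemma choose_two_ge (n : ℕ) (hn : 4 ≤ n) : n + 2 ≤ n.choose 2 := by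
  induction n, hn using Nat.le_induction with
  | base => decide
  | succ n hn ih =>
    rw [Nat.choose_succ_succ, Nat.choose_one_right]
    simp only [show Nat.succ 1 = 2 from rfl]
    omega

lemma choose_sum_ge (n : ℕ) (hn : 7 ≤ n) : (n + 1) ^ 2 ≤ 1 + n + n.choose 2 + n.choose 3 := by
  induction n, hn using Nat.le_induction with
  | base => decide
  | succ n hn ih =>
    have h2 := choose_two_ge n (by omega)
    rw [Nat.choose_succ_succ n 1, Nat.choose_succ_succ n 2, Nat.choose_one_right]
    have e1 : (n + 1 + 1) ^ 2 = (n + 1) ^ 2 + (2 * n + 3) := by ring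
    simp only [show Nat.succ 1 = 2 from rfl, show Nat.succ 2 = 3 from rfl]
    omega

lemma sum_symmDiff_char2 (B C : Finset ℕ) (f : ℕ → ZMod 2) :
    ∑ d ∈ (symmDiff B C), f d = ∑ d ∈ B, f d + ∑ d ∈ C, f d := by
  classical
  have h1 : ∑ d ∈ B ∪ C, f d + ∑ d ∈ B ∩ C, f d = ∑ d ∈ B, f d + ∑ d ∈ C, f d :=
    Finset.sum_union_inter
  have hDC : symmDiff B C = (B ∪ C) \ (B ∩ C) := by
    rw [symmDiff_eq_sup_sdiff_inf]; rfl
  have h2 : ∑ d ∈ (B ∪ C) \ (B ∩ C), f d + ∑ d ∈ B ∩ C, f d = ∑ d ∈ B ∪ C, f d :=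
    Finset.sum_sdiff (Finset.inter_subset_union)
  have hb : (∑ d ∈ B ∩ C, f d) + (∑ d ∈ B ∩ C, f d) = 0 := CharTwo.add_self_eq_zero _
  rw [hDC]
  calc ∑ d ∈ (B ∪ C) \ (B ∩ C), f d
      = ∑ d ∈ (B ∪ C) \ (B ∩ C), f d + ((∑ d ∈ B ∩ C, f d) + (∑ d ∈ B ∩ C, f d)) := by
        rw [hb, add_zero]
    _ = (∑ d ∈ (B ∪ C) \ (B ∩ C), f d + ∑ d ∈ B ∩ C, f d) + ∑ d ∈ B ∩ C, f d := by ring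
    _ = ∑ d ∈ B ∪ C, f d + ∑ d ∈ B ∩ C, f d := by rw [h2]
    _ = _ := h1

lemma rec_all {s : ℕ → ZMod 2} {T L : ℕ} (hT : 0 < T) (hLT : L ≤ T)
    (hper : ∀ i, s (i + T) = s i) {c : Fin L → ZMod 2}
    (hc : ∀ i, i + L < 2 * T → s (i + L) = ∑ j : Fin L, c j * s (i + j)) :
    ∀ i, s (i + L) = ∑ j : Fin L, c j * s (i + j) := by
  intro i
  induction i using Nat.strong_induction_on with
  | _ i ih =>
    by_cases h : i + L < 2 * T
    · exact hc i h
    · obtain ⟨i', rfl⟩ : ∃ i', i = i' + T := ⟨i - T, by omega⟩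
      rw [show i' + T + L = i' + L + T by omega, hper (i' + L), ih i' (by omega)]
      refine Finset.sum_congr rfl fun j _ => ?_
      rw [show i' + T + (j : ℕ) = i' + (j : ℕ) + T by omega, hper]

lemma all_zero_of_rec {t : ℕ → ZMod 2} {L : ℕ} {c : Fin L → ZMod 2}
    (hrec : ∀ i, t (i + L) = ∑ j : Fin L, c j * t (i + j))
    (hinit : ∀ j < L, t j = 0) : ∀ n, t n = 0 := by
  rcases Nat.eq_zero_or_pos L with rfl | hLpos
  · intro n; simpa using hrec n
  intro n
  induction n using Nat.strong_induction_on with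
  | _ n ih =>
    by_cases h : n < L
    · exact hinit n h
    · obtain ⟨i, rfl⟩ : ∃ i, n = i + L := ⟨n - L, by omega⟩
      rw [hrec i]
      refine Finset.sum_eq_zero fun j _ => ?_
      have hj := j.isLt
      rw [ih (i + j) (by omega), mul_zero]

lemma sum_orderEmbOfFin' {M : Type*} [AddCommMonoid M] (D : Finset ℕ) {k : ℕ} (h : D.card = k)
    (g : ℕ → M) : ∑ j : Fin k, g (D.orderEmbOfFin h j) = ∑ d ∈ D, g d := by
  calc ∑ j : Fin k, g (D.orderEmbOfFin h j)
      = ∑ x : {x // x ∈ D}, g ↑x := by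
        rw [← Equiv.sum_comp (D.orderIsoOfFin h).toEquiv (fun x : {x // x ∈ D} => g ↑x)]
        exact Finset.sum_congr rfl fun j _ => by
          simp [Finset.coe_orderIsoOfFin_apply]
    _ = ∑ d ∈ D, g d := Finset.sum_coe_sort D g

lemma pcorr_full (s : ℕ → ZMod 2) (T : ℕ) (D : Finset ℕ)
    (hDsub : ∀ d ∈ D, d < T)
    (hz : ∀ n, ∑ d ∈ D, s (n + d) = 0) :
    pcorr s T D.card = T := by
  have hcard : D.card = D.card := rfl
  set k := D.card with hk
  set e : Fin k → ℕ := fun j => D.orderEmbOfFin hcard j with he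
  have hmono : StrictMono e := (D.orderEmbOfFin hcard).strictMono
  have hlt : ∀ j, e j < T := fun j => hDsub _ (Finset.orderEmbOfFin_mem D hcard j)
  have hterm : ∀ n : ℕ, ((-1 : ℤ) ^ (∑ j : Fin k, (s (n + e j)).val)) = 1 := by
    intro n
    have hsum : ∑ j : Fin k, s (n + e j) = 0 := by
      rw [show (fun j => s (n + e j)) = fun j => (fun d => s (n + d)) (e j) from rfl]
      rw [sum_orderEmbOfFin' D hcard (fun d => s (n + d))]
      exact hz n
    have hcast : ((∑ j : Fin k, (s (n + e j)).val : ℕ) : ZMod 2) = 0 := by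
      push_cast
      rw [show (fun j : Fin k => ((s (n + e j)).val : ZMod 2)) = fun j : Fin k => s (n + e j)
        from funext fun j => ZMod.natCast_rightInverse _]
      exact hsum
    have hdvd : 2 ∣ ∑ j : Fin k, (s (n + e j)).val :=
      (ZMod.natCast_eq_zero_iff _ 2).mp hcast
    exact Even.neg_one_pow (even_iff_two_dvd.mpr hdvd)
  have hmem : (T : ℕ) ∈ {m : ℕ | ∃ d : Fin k → ℕ, StrictMono d ∧ (∀ j, d j < T) ∧
      m = (∑ n ∈ range T, (-1 : ℤ) ^ (∑ j : Fin k, (s (n + d j)).val)).natAbs} := by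
    refine ⟨e, hmono, hlt, ?_⟩
    rw [Finset.sum_congr rfl fun n _ => hterm n]
    simp
  have hub : ∀ m ∈ {m : ℕ | ∃ d : Fin k → ℕ, StrictMono d ∧ (∀ j, d j < T) ∧
      m = (∑ n ∈ range T, (-1 : ℤ) ^ (∑ j : Fin k, (s (n + d j)).val)).natAbs}, m ≤ T := by
    rintro m ⟨d, -, -, rfl⟩
    have h1 : |∑ n ∈ range T, (-1 : ℤ) ^ (∑ j : Fin k, (s (n + d j)).val)| ≤ (T : ℤ) := by
      calc |∑ n ∈ range T, (-1 : ℤ) ^ (∑ j : Fin k, (s (n + d j)).val)|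
          ≤ ∑ n ∈ range T, |(-1 : ℤ) ^ (∑ j : Fin k, (s (n + d j)).val)| :=
            Finset.abs_sum_le_sum_abs _ _
        _ ≤ ∑ n ∈ range T, 1 := Finset.sum_le_sum fun n _ => by
            rw [abs_pow, abs_neg, abs_one, one_pow]
        _ = (T : ℤ) := by simp
    have := Int.abs_eq_natAbs (∑ n ∈ range T, (-1 : ℤ) ^ (∑ j : Fin k, (s (n + d j)).val))
    omega
  rw [pcorr]
  exact le_antisymm (csSup_le ⟨T, hmem⟩ hub) (le_csSup ⟨T, fun m hm => hub m hm⟩ hmem)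

lemma peak_of_zero (s : ℕ → ZMod 2) (T : ℕ) (hT : 2 ≤ T) (hs : ∀ m, s m = 0) :
    ∃ k, 1 < k ∧ k ≤ 7 ∧ pcorr s T k = T := by
  have hcard : ({0, 1} : Finset ℕ).card = 2 := by decide
  have h := pcorr_full s T {0, 1}
    (by
      intro d hd
      simp only [Finset.mem_insert, Finset.mem_singleton] at hd
      omega)
    (fun n => Finset.sum_eq_zero fun d _ => hs _)
  rw [hcard] at h
  exact ⟨2, by norm_num, by norm_num, h⟩

/-- **Gold codes.** A `(2^ℓ - 1)`-periodic binary sequence with linear complexity at most `2ℓ`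
has a full peak in the periodic correlation measure of some order `k` with `1 < k ≤ 7`. -/
theorem gold_code_peak (ℓ : ℕ) (hℓ : 3 ≤ ℓ) (s : ℕ → ZMod 2)
    (hper : ∀ i, s (i + (2 ^ ℓ - 1)) = s i)
    (hL : linComplexity s (2 * (2 ^ ℓ - 1)) ≤ 2 * ℓ) :
    ∃ k, 1 < k ∧ k ≤ 7 ∧ pcorr s (2 ^ ℓ - 1) k = 2 ^ ℓ - 1 := by
  classical
  set T := 2 ^ ℓ - 1 with hTdef
  have hpow : T + 1 = 2 ^ ℓ := by
    have : 1 ≤ 2 ^ ℓ := Nat.one_le_two_pow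
    omega
  have hT7 : 7 ≤ T := by
    have : 2 ^ 3 ≤ 2 ^ ℓ := Nat.pow_le_pow_right (by norm_num) hℓ
    omega
  have h2l : 2 * ℓ ≤ T := by
    have := two_mul_lt_two_pow hℓ; omega
  by_cases hz0 : ∀ i < 2 * T, s i = 0
  · have hs : ∀ m, s m = 0 := by
      intro m
      induction m using Nat.strong_induction_on with
      | _ m ih =>
        by_cases h : m < 2 * T
        · exact hz0 m h
        · obtain ⟨m', rfl⟩ : ∃ m', m = m' + T := ⟨m - T, by omega⟩
          rw [hper m']
          exact ih m' (by omega)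
    exact peak_of_zero s T (by omega) hs
  · rw [linComplexity, if_neg hz0] at hL
    have hne : {L | 0 < L ∧ IsLinRecOn s (2 * T) L}.Nonempty :=
      ⟨2 * T, by omega, ⟨fun _ => 0, fun i h => by omega⟩⟩
    set L := sInf {L | 0 < L ∧ IsLinRecOn s (2 * T) L} with hLdef
    obtain ⟨hLpos, c, hc⟩ := Nat.sInf_mem hne
    have hrecall : ∀ i, s (i + L) = ∑ j : Fin L, c j * s (i + j) :=
      rec_all (by omega) (by omega) hper hc
    -- pigeonhole setup
    set 𝒜 : Finset (Finset ℕ) := (range 4).biUnion (fun i => (range T).powersetCard i) with h𝒜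
    have hAmem : ∀ A ∈ 𝒜, A ⊆ range T ∧ A.card ≤ 3 := by
      intro A hA'
      rw [h𝒜, Finset.mem_biUnion] at hA'
      obtain ⟨i, hi, hAi⟩ := hA'
      rw [Finset.mem_powersetCard] at hAi
      rw [Finset.mem_range] at hi
      exact ⟨hAi.1, by omega⟩
    have hcard𝒜 : 𝒜.card = 1 + T + T.choose 2 + T.choose 3 := by
      rw [h𝒜, Finset.card_biUnion]
      · simp [Finset.card_powersetCard, Finset.sum_range_succ]
      · intro x hx y hy hxy
        rw [Function.onFun, Finset.disjoint_left]
        intro A h1 h2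
        rw [Finset.mem_powersetCard] at h1 h2
        exact hxy (h1.2 ▸ h2.2 ▸ rfl)
    set A₀ : Finset ℕ := range 4 with hA0def
    have hA0card : A₀.card = 4 := Finset.card_range 4
    have hA0sub : A₀ ⊆ range T := by
      intro x hx
      rw [hA0def, Finset.mem_range] at hx
      rw [Finset.mem_range]
      omega
    have hA0not : A₀ ∉ 𝒜 := fun h => by
      have := (hAmem A₀ h).2
      omega
    set 𝒜' := insert A₀ 𝒜 with h𝒜'
    have hcard𝒜' : 𝒜'.card = 2 + T + T.choose 2 + T.choose 3 := by
      rw [h𝒜', Finset.card_insert_of_notMem hA0not, hcard𝒜]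
      omega
    set φ : Finset ℕ → (Fin L → ZMod 2) := fun A j => ∑ d ∈ A, s (↑j + d) with hφ
    have hcardlt : (Finset.univ : Finset (Fin L → ZMod 2)).card < 𝒜'.card := by
      rw [Finset.card_univ]
      have h1 : Fintype.card (Fin L → ZMod 2) = 2 ^ L := by
        simp
      have h2 : 2 ^ L ≤ 2 ^ (2 * ℓ) := Nat.pow_le_pow_right (by norm_num) hL
      have h3 : (T + 1) ^ 2 = 2 ^ (2 * ℓ) := by
        rw [hpow, ← pow_mul, Nat.mul_comm]
      have h4 := choose_sum_ge T hT7
      omega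
    obtain ⟨B, hB, C, hC, hBC, hφBC⟩ :=
      Finset.exists_ne_map_eq_of_card_lt_of_maps_to hcardlt (fun A _ => Finset.mem_univ (φ A))
    set D := symmDiff B C with hDdef
    have hDne : D.Nonempty := by
      rw [Finset.nonempty_iff_ne_empty]
      intro h
      exact hBC (Finset.symmDiff_eq_empty.mp h)
    have hDU : D ⊆ B ∪ C := by
      rw [hDdef]
      have : symmDiff B C = (B ∪ C) \ (B ∩ C) := by
        rw [symmDiff_eq_sup_sdiff_inf]; rfl
      rw [this]
      exact Finset.sdiff_subset
    have hsubT : ∀ A ∈ 𝒜', A ⊆ range T := by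
      intro A hA''
      rcases Finset.mem_insert.mp hA'' with rfl | h
      · exact hA0sub
      · exact (hAmem A h).1
    have hDsub : ∀ d ∈ D, d < T := by
      intro d hd
      have hd' := hDU hd
      rcases Finset.mem_union.mp hd' with h | h
      · exact Finset.mem_range.mp (hsubT B hB h)
      · exact Finset.mem_range.mp (hsubT C hC h)
    have hBCcard : B.card + C.card ≤ 7 := by
      rcases Finset.mem_insert.mp hB with rfl | hB'
      · rcases Finset.mem_insert.mp hC with h | hC'
        · exact absurd h.symm hBC
        · have := (hAmem C hC').2
          omega
      · have h1 := (hAmem B hB').2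
        rcases Finset.mem_insert.mp hC with rfl | hC'
        · omega
        · have := (hAmem C hC').2
          omega
    have hDcard7 : D.card ≤ 7 := by
      calc D.card ≤ (B ∪ C).card := Finset.card_le_card hDU
        _ ≤ B.card + C.card := Finset.card_union_le _ _
        _ ≤ 7 := hBCcard
    -- the combined sequence
    set t : ℕ → ZMod 2 := fun n => ∑ d ∈ D, s (n + d) with ht
    have hinit : ∀ j < L, t j = 0 := by
      intro j hj
      have hj' : φ B ⟨j, hj⟩ = φ C ⟨j, hj⟩ := by rw [hφBC]
      have hsd := sum_symmDiff_char2 B C (fun d => s (j + d))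
      show (∑ d ∈ D, s (j + d)) = 0
      rw [hDdef, hsd]
      have : (∑ d ∈ B, s (j + d)) = ∑ d ∈ C, s (j + d) := hj'
      rw [this]
      exact CharTwo.add_self_eq_zero _
    have htrec : ∀ i, t (i + L) = ∑ j : Fin L, c j * t (i + j) := by
      intro i
      show (∑ d ∈ D, s (i + L + d)) = ∑ j : Fin L, c j * ∑ d ∈ D, s (i + ↑j + d)
      calc ∑ d ∈ D, s (i + L + d) = ∑ d ∈ D, s ((i + d) + L) :=
            Finset.sum_congr rfl fun d _ => by rw [show i + L + d = i + d + L by omega]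
        _ = ∑ d ∈ D, ∑ j : Fin L, c j * s (i + d + j) :=
            Finset.sum_congr rfl fun d _ => hrecall (i + d)
        _ = ∑ j : Fin L, ∑ d ∈ D, c j * s (i + d + j) := Finset.sum_comm
        _ = ∑ j : Fin L, c j * ∑ d ∈ D, s (i + ↑j + d) := by
            refine Finset.sum_congr rfl fun j _ => ?_
            rw [Finset.mul_sum]
            exact Finset.sum_congr rfl fun d _ => by
              rw [show i + d + (j : ℕ) = i + (j : ℕ) + d by omega]
    have hzall : ∀ n, t n = 0 := all_zero_of_rec htrec hinit
    rcases Nat.lt_or_ge D.card 2 with h2 | h2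
    · -- |D| = 1, so s vanishes identically
      have h1 : D.card = 1 := by
        have := Finset.card_pos.mpr hDne
        omega
      obtain ⟨d, hd⟩ := Finset.card_eq_one.mp h1
      have hdT : d < T := hDsub d (hd ▸ Finset.mem_singleton_self d)
      have hzd : ∀ n, s (n + d) = 0 := by
        intro n
        have h3 := hzall n
        rw [ht] at h3
        simp only [hd, Finset.sum_singleton] at h3
        exact h3
      have hs : ∀ m, s m = 0 := by
        intro m
        have h3 : s m = s (m + T) := (hper m).symm
        rw [h3, show m + T = (m + T - d) + d by omega]
        exact hzd _
      exact peak_of_zero s T (by omega) hs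
    · exact ⟨D.card, by omega, hDcard7, pcorr_full s T D hDsub hzall⟩
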